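/- arXiv:0905.3682 — 3 statements merged into one kernel-verified Lean document; each statement's English description precedes it below -/
import Mathlib

section
/- For any positive integer k, the expected number of fixed points of π^k, where π is a uniformly random permutation of an n-element set, tends to τ(k) as n → ∞, where τ(k) is the number of positive divisors of k. Moreover, for n ≥ k this expectation is exactly τ(k). -/
open Filter Equiv Equiv.Perm Function Finset

/-- Every point of a permutation of a finite type is periodic. -/
lemma perm_mem_periodicPts {α : Type*} [Fintype α] (π : Equiv.Perm α) (x : α) :
    x ∈ Function.periodicPts ⇑π := by
  refine ⟨orderOf π, orderOf_pos π, ?_⟩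
  show (⇑π)^[orderOf π] x = x
  rw [Equiv.Perm.iterate_eq_pow, pow_orderOf_eq_one]
  rfl

lemma perm_minimalPeriod_pos {α : Type*} [Fintype α] (π : Equiv.Perm α) (x : α) :
    0 < Function.minimalPeriod ⇑π x :=
  Function.minimalPeriod_pos_of_mem_periodicPts (perm_mem_periodicPts π x)

lemma perm_minimalPeriod_le {n : ℕ} (π : Equiv.Perm (Fin n)) (x : Fin n) :
    Function.minimalPeriod ⇑π x ≤ n := by
  have h := Function.iterate_injOn_Iio_minimalPeriod (f := ⇑π) (x := x)
  have : (Finset.range (Function.minimalPeriod ⇑π x)).card ≤ (Finset.univ : Finset (Fin n)).card := by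
    apply Finset.card_le_card_of_injOn (fun j => (⇑π)^[j] x) (fun _ _ => Finset.mem_univ _)
    intro a ha b hb hab
    exact h (by simpa using ha) (by simpa using hb) hab
  simpa using this

lemma mp_conj {α : Type*} [DecidableEq α] (c π : Equiv.Perm α) (x : α) :
    Function.minimalPeriod ⇑(c * π * c⁻¹) (c x) = Function.minimalPeriod ⇑π x := by
  rw [Function.minimalPeriod_eq_minimalPeriod_iff]
  intro m
  show (⇑(c * π * c⁻¹))^[m] (c x) = c x ↔ (⇑π)^[m] x = x
  rw [Equiv.Perm.iterate_eq_pow, Equiv.Perm.iterate_eq_pow, conj_pow]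
  simp [Equiv.Perm.mul_apply]

lemma mp_decompose_zero {n : ℕ} (σ : Equiv.Perm (Fin n)) :
    Function.minimalPeriod ⇑(Equiv.Perm.decomposeFin.symm (0, σ)) 0 = 1 := by
  rw [Function.minimalPeriod_eq_one_iff_isFixedPt]
  show Equiv.Perm.decomposeFin.symm (0, σ) 0 = 0
  simp

lemma mp_decompose_succ {n : ℕ} (y : Fin n) (σ : Equiv.Perm (Fin n)) :
    Function.minimalPeriod ⇑(Equiv.Perm.decomposeFin.symm (y.succ, σ)) 0
      = Function.minimalPeriod ⇑σ y + 1 := by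
  set π := Equiv.Perm.decomposeFin.symm (y.succ, σ) with hπ
  set m := Function.minimalPeriod ⇑σ y with hm
  have hm1 : 0 < m := perm_minimalPeriod_pos σ y
  have key : ∀ j, j < m → (⇑π)^[j + 1] 0 = ((⇑σ)^[j] y).succ := by
    intro j
    induction j with
    | zero =>
      intro _
      show π 0 = _
      simp [hπ]
    | succ j ihj =>
      intro hj
      have h1 : (⇑π)^[j + 1 + 1] 0 = π (((⇑σ)^[j] y).succ) := by
        rw [Function.iterate_succ_apply', ihj (Nat.lt_of_succ_lt hj)]
      have hne : (⇑σ)^[j + 1] y ≠ y := fun h =>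
        Function.not_isPeriodicPt_of_pos_of_lt_minimalPeriod (Nat.succ_ne_zero j) hj h
      rw [h1, hπ, Equiv.Perm.decomposeFin_symm_apply_succ,
        show σ ((⇑σ)^[j] y) = (⇑σ)^[j + 1] y from (Function.iterate_succ_apply' ⇑σ j y).symm,
        Equiv.swap_apply_of_ne_of_ne (Fin.succ_ne_zero _)
          (fun h => hne (Fin.succ_injective _ h))]
  have hper : (⇑π)^[m + 1] 0 = 0 := by
    have hkey := key (m - 1) (Nat.sub_lt hm1 one_pos)
    have hmm : m - 1 + 1 = m := by omega
    rw [hmm] at hkey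
    have hcyc : σ ((⇑σ)^[m - 1] y) = y := by
      rw [show σ ((⇑σ)^[m-1] y) = (⇑σ)^[m-1+1] y from (Function.iterate_succ_apply' ⇑σ _ y).symm,
        hmm, hm, Function.iterate_minimalPeriod]
    rw [Function.iterate_succ_apply', hkey, hπ, Equiv.Perm.decomposeFin_symm_apply_succ,
      hcyc, Equiv.swap_apply_right]
  have hP : Function.IsPeriodicPt ⇑π (m + 1) 0 := hper
  have hpos : 0 < Function.minimalPeriod ⇑π 0 := hP.minimalPeriod_pos (Nat.succ_pos m)
  have hle : Function.minimalPeriod ⇑π 0 ≤ m + 1 := hP.minimalPeriod_le (Nat.succ_pos m)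
  have hge : m + 1 ≤ Function.minimalPeriod ⇑π 0 := by
    by_contra h
    push_neg at h
    have hkey := key (Function.minimalPeriod ⇑π 0 - 1) (by omega)
    have hpp : Function.minimalPeriod ⇑π 0 - 1 + 1 = Function.minimalPeriod ⇑π 0 := by omega
    rw [hpp] at hkey
    have h0 : (⇑π)^[Function.minimalPeriod ⇑π 0] 0 = 0 := Function.iterate_minimalPeriod
    rw [hkey] at h0
    exact Fin.succ_ne_zero _ h0
  omega

/-- The number of permutations of `Fin n` for which a fixed basepoint has minimal
period `d` is `(n-1)!`, for every `1 ≤ d ≤ n`. -/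
lemma key_count : ∀ n : ℕ, ∀ x₀ : Fin n, ∀ d : ℕ, 1 ≤ d → d ≤ n →
    (Finset.univ.filter fun π : Equiv.Perm (Fin n) =>
      Function.minimalPeriod ⇑π x₀ = d).card = (n - 1).factorial := by
  intro n
  induction n with
  | zero => exact fun x₀ => x₀.elim0
  | succ n ih =>
    have h0 : ∀ d : ℕ, 1 ≤ d → d ≤ n + 1 →
        (Finset.univ.filter fun π : Equiv.Perm (Fin (n+1)) =>
          Function.minimalPeriod ⇑π 0 = d).card = n.factorial := by
      intro d hd1 hdn
      have hcard : (Finset.univ.filter fun π : Equiv.Perm (Fin (n+1)) =>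
            Function.minimalPeriod ⇑π 0 = d).card
          = (Finset.univ.filter fun pr : Fin (n+1) × Equiv.Perm (Fin n) =>
            Function.minimalPeriod ⇑(Equiv.Perm.decomposeFin.symm pr) 0 = d).card := by
        apply Finset.card_bij (fun π _ => Equiv.Perm.decomposeFin π)
        · intro π hπ
          simp only [Finset.mem_filter, Finset.mem_univ, true_and] at hπ ⊢
          simpa using hπ
        · intro a ha b hb hab
          exact Equiv.Perm.decomposeFin.injective hab
        · intro pr hpr
          refine ⟨Equiv.Perm.decomposeFin.symm pr, ?_, by simp⟩
          simp only [Finset.mem_filter, Finset.mem_univ, true_and] at hpr ⊢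
          simpa using hpr
      rw [hcard, Finset.card_filter, Fintype.sum_prod_type, Fin.sum_univ_succ]
      rcases Nat.lt_or_ge d 2 with hd2 | hd2
      · have hd : d = 1 := by omega
        subst hd
        have t1 : ∀ σ : Equiv.Perm (Fin n),
            (if Function.minimalPeriod ⇑(Equiv.Perm.decomposeFin.symm (0, σ)) 0 = 1
              then 1 else 0) = 1 := by
          intro σ; rw [if_pos (mp_decompose_zero σ)]
        have t2 : ∀ y : Fin n, ∀ σ : Equiv.Perm (Fin n),
            (if Function.minimalPeriod ⇑(Equiv.Perm.decomposeFin.symm (y.succ, σ)) 0 = 1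
              then 1 else 0) = 0 := by
          intro y σ
          rw [if_neg]
          rw [mp_decompose_succ]
          have := perm_minimalPeriod_pos σ y
          omega
        simp only [t1, t2, Finset.sum_const, Finset.card_univ, smul_eq_mul, mul_one,
          Finset.sum_const_zero, add_zero]
        simp [Fintype.card_perm]
      · have hn1 : 1 ≤ n := by omega
        have t1 : ∀ σ : Equiv.Perm (Fin n),
            (if Function.minimalPeriod ⇑(Equiv.Perm.decomposeFin.symm (0, σ)) 0 = d
              then 1 else 0) = 0 := by
          intro σ
          rw [if_neg]
          rw [mp_decompose_zero]
          omega
        have t2 : ∀ y : Fin n,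
            (∑ σ : Equiv.Perm (Fin n),
              if Function.minimalPeriod ⇑(Equiv.Perm.decomposeFin.symm (y.succ, σ)) 0 = d
              then 1 else 0) = (n - 1).factorial := by
          intro y
          have : ∀ σ : Equiv.Perm (Fin n),
              (Function.minimalPeriod ⇑(Equiv.Perm.decomposeFin.symm (y.succ, σ)) 0 = d)
                ↔ Function.minimalPeriod ⇑σ y = d - 1 := by
            intro σ
            rw [mp_decompose_succ]
            omega
          simp only [this]
          rw [← Finset.card_filter]
          exact ih y (d - 1) (by omega) (by omega)
        simp only [t1, Finset.sum_const_zero, zero_add, t2, Finset.sum_const,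
          Finset.card_univ, Fintype.card_fin, smul_eq_mul]
        exact Nat.mul_factorial_pred (by omega)
    intro x₀ d hd1 hdn
    have hres := h0 d hd1 hdn
    rw [show n + 1 - 1 = n from rfl, ← hres]
    set c := Equiv.swap (0 : Fin (n+1)) x₀ with hc
    apply Finset.card_bij (fun π _ => c * π * c⁻¹)
    · intro π hπ
      simp only [Finset.mem_filter, Finset.mem_univ, true_and] at hπ ⊢
      have : c x₀ = 0 := by simp [hc, Equiv.swap_apply_right]
      rw [← this, mp_conj, hπ]
    · intro a ha b hb hab
      have := congrArg (fun π => c⁻¹ * π * c) hab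
      simpa [mul_assoc] using this
    · intro π hπ
      simp only [Finset.mem_filter, Finset.mem_univ, true_and] at hπ
      refine ⟨c⁻¹ * π * c, ⟨Finset.mem_filter.2 ⟨Finset.mem_univ _, ?_⟩, ?_⟩⟩
      · have h1 : Function.minimalPeriod ⇑(c⁻¹ * π * c⁻¹⁻¹) (c⁻¹ 0) = Function.minimalPeriod ⇑π 0 :=
          mp_conj c⁻¹ π 0
        have h2 : c⁻¹ (0 : Fin (n+1)) = x₀ := by simp [hc, Equiv.swap_apply_left]
        rw [h2, inv_inv] at h1
        rw [h1, hπ]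
      · group

/-- Main counting identity. -/
lemma sum_count (k n : ℕ) (hk : 0 < k) (hn : 0 < n) :
    ∑ π : Equiv.Perm (Fin n), (Finset.univ.filter fun x : Fin n => (π ^ k) x = x).card
      = n.factorial * ((Nat.divisors k).filter (· ≤ n)).card := by
  have step1 : ∀ π : Equiv.Perm (Fin n), ∀ x : Fin n,
      ((π ^ k) x = x) ↔ Function.minimalPeriod ⇑π x ∣ k := by
    intro π x
    rw [← Function.isPeriodicPt_iff_minimalPeriod_dvd]
    exact Iff.rfl
  have step2 : ∀ x : Fin n,
      (Finset.univ.filter fun π : Equiv.Perm (Fin n) =>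
        Function.minimalPeriod ⇑π x ∣ k).card
      = ((Nat.divisors k).filter (· ≤ n)).card * (n - 1).factorial := by
    intro x
    rw [Finset.card_eq_sum_card_fiberwise
      (f := fun π : Equiv.Perm (Fin n) => Function.minimalPeriod ⇑π x)
      (t := (Nat.divisors k).filter (· ≤ n)) ?_]
    · rw [Finset.sum_congr rfl (fun d hd => ?_), Finset.sum_const, smul_eq_mul]
      simp only [Finset.mem_filter, Nat.mem_divisors] at hd
      rw [Finset.filter_filter]
      have : ∀ π : Equiv.Perm (Fin n),
          ((Function.minimalPeriod ⇑π x ∣ k ∧ Function.minimalPeriod ⇑π x = d)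
            ↔ Function.minimalPeriod ⇑π x = d) := by
        intro π
        constructor
        · exact fun h => h.2
        · exact fun h => ⟨h ▸ hd.1.1, h⟩
      rw [Finset.filter_congr (fun π _ => this π)]
      exact key_count n x d (Nat.pos_of_mem_divisors (Nat.mem_divisors.2 hd.1)) hd.2
    · intro π hπ
      simp only [Finset.mem_filter, Finset.mem_univ, true_and] at hπ ⊢
      exact Finset.mem_filter.2 ⟨Nat.mem_divisors.2 ⟨by simpa using hπ, hk.ne'⟩, perm_minimalPeriod_le π x⟩
  calc ∑ π : Equiv.Perm (Fin n), (Finset.univ.filter fun x : Fin n => (π ^ k) x = x).card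
      = ∑ π : Equiv.Perm (Fin n), (Finset.univ.filter fun x : Fin n =>
          Function.minimalPeriod ⇑π x ∣ k).card := by
        refine Finset.sum_congr rfl fun π _ => ?_
        congr 1
        exact Finset.filter_congr fun x _ => by simp [step1 π x]
    _ = ∑ x : Fin n, (Finset.univ.filter fun π : Equiv.Perm (Fin n) =>
          Function.minimalPeriod ⇑π x ∣ k).card := by
        simp_rw [Finset.card_filter]
        exact Finset.sum_comm
    _ = ∑ _x : Fin n, ((Nat.divisors k).filter (· ≤ n)).card * (n - 1).factorial := by
        exact Finset.sum_congr rfl fun x _ => step2 x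
    _ = n.factorial * ((Nat.divisors k).filter (· ≤ n)).card := by
        rw [Finset.sum_const, Finset.card_univ, Fintype.card_fin, smul_eq_mul,
          ← mul_assoc, mul_comm n, mul_assoc, Nat.mul_factorial_pred hn.ne', mul_comm]

/-- For a positive integer `k`, the expected number of fixed points of `π ^ k`, for `π`
uniformly random in `S_n`, tends to `τ(k)` (the number of positive divisors of `k`) as
`n → ∞`; moreover for every `n ≥ k` the expectation is exactly `τ(k)`. -/
theorem expected_fixed_points_pow (k : ℕ) (hk : 0 < k) :
    Tendsto
      (fun n : ℕ =>
        (∑ π : Equiv.Perm (Fin n), ({x : Fin n | (π ^ k) x = x}.ncard : ℝ)) / n.factorial)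
      atTop (nhds (Nat.divisors k).card) ∧
    ∀ n : ℕ, k ≤ n →
      (∑ π : Equiv.Perm (Fin n), ({x : Fin n | (π ^ k) x = x}.ncard : ℝ)) / n.factorial
        = (Nat.divisors k).card := by
  have main : ∀ n : ℕ, k ≤ n →
      (∑ π : Equiv.Perm (Fin n), ({x : Fin n | (π ^ k) x = x}.ncard : ℝ)) / n.factorial
        = (Nat.divisors k).card := by
    intro n hn
    have hn0 : 0 < n := lt_of_lt_of_le hk hn
    have hfilter : (Nat.divisors k).filter (· ≤ n) = Nat.divisors k := by
      apply Finset.filter_true_of_mem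
      intro d hd
      exact le_trans (Nat.divisor_le hd) hn
    have hsum := sum_count k n hk hn0
    rw [hfilter] at hsum
    have hnc : ∀ π : Equiv.Perm (Fin n), {x : Fin n | (π ^ k) x = x}.ncard
        = (Finset.univ.filter fun x : Fin n => (π ^ k) x = x).card := by
      intro π
      rw [Set.ncard_eq_toFinset_card']
      congr 1
      ext x
      simp
    have hcast : (∑ π : Equiv.Perm (Fin n), ({x : Fin n | (π ^ k) x = x}.ncard : ℝ))
        = ((n.factorial * (Nat.divisors k).card : ℕ) : ℝ) := by
      rw [← hsum, Nat.cast_sum]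
      exact Finset.sum_congr rfl fun π _ => by rw [hnc π]
    rw [hcast]
    push_cast
    rw [mul_comm, mul_div_assoc, div_self (by exact_mod_cast Nat.factorial_ne_zero n), mul_one]
  refine ⟨?_, main⟩
  have heq : (fun n : ℕ =>
      (∑ π : Equiv.Perm (Fin n), ({x : Fin n | (π ^ k) x = x}.ncard : ℝ)) / n.factorial)
        =ᶠ[atTop] fun _ => ((Nat.divisors k).card : ℝ) := by
    filter_upwards [eventually_ge_atTop k] with n hn using main n hn
  exact Tendsto.congr' heq.symm tendsto_const_nhds
end

section
/- For a uniformly random permutation of an n-element set with n ≥ k, the expected number of points lying in cycles of length dividing k is exactly τ(k), the number of divisors of k. -/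
open Equiv Function Finset

noncomputable section
open scoped Classical

variable {n ℓ : ℕ}

/-- Build a permutation from cycle data `f` (the cycle through `f 0`, in order) and a
permutation `σ` of the complement of the cycle. -/
noncomputable def buildPerm (f : Fin ℓ ↪ Fin n)
    (σ : Equiv.Perm {y : Fin n // y ∉ Set.range ⇑f}) : Equiv.Perm (Fin n) :=
  ((finRotate ℓ).extendDomain (Equiv.ofInjective ⇑f f.injective)) * Equiv.Perm.ofSubtype σ

theorem buildPerm_apply_mem (f : Fin ℓ ↪ Fin n) (σ : Equiv.Perm {y : Fin n // y ∉ Set.range ⇑f})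
    (i : Fin ℓ) : buildPerm f σ (f i) = f (finRotate ℓ i) := by
  have h1 : Equiv.Perm.ofSubtype σ (f i) = f i :=
    Equiv.Perm.ofSubtype_apply_of_not_mem σ (by simp)
  have h2 := Equiv.Perm.extendDomain_apply_image (finRotate ℓ)
      (Equiv.ofInjective ⇑f f.injective) i
  simp only [buildPerm, Equiv.Perm.mul_apply, h1]
  simpa using h2

theorem buildPerm_apply_not_mem (f : Fin ℓ ↪ Fin n)
    (σ : Equiv.Perm {y : Fin n // y ∉ Set.range ⇑f}) {y : Fin n} (hy : y ∉ Set.range ⇑f) :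
    buildPerm f σ y = ↑(σ ⟨y, hy⟩) := by
  have h1 : Equiv.Perm.ofSubtype σ y = ↑(σ ⟨y, hy⟩) :=
    Equiv.Perm.ofSubtype_apply_of_mem σ hy
  have h2 : ((finRotate ℓ).extendDomain (Equiv.ofInjective ⇑f f.injective)) ↑(σ ⟨y, hy⟩) =
      ↑(σ ⟨y, hy⟩) :=
    Equiv.Perm.extendDomain_apply_not_subtype _ _ (σ ⟨y, hy⟩).2
  simp only [buildPerm, Equiv.Perm.mul_apply, h1, h2]

theorem finRotate_mk (hℓ : 0 < ℓ) (m : ℕ) (hm : m + 1 < ℓ) (hm' : m < ℓ) :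
    finRotate ℓ ⟨m, hm'⟩ = ⟨m + 1, hm⟩ := by
  obtain ⟨ℓ, rfl⟩ := Nat.exists_eq_succ_of_ne_zero hℓ.ne'
  rw [finRotate_succ_apply]
  apply Fin.ext
  rw [Fin.val_add_one]
  have : (⟨m, hm'⟩ : Fin (ℓ + 1)) ≠ Fin.last ℓ := by
    simp only [ne_eq, Fin.ext_iff, Fin.val_last]; omega
  simp [this]

theorem finRotate_wrap (hℓ : 0 < ℓ) (hm' : ℓ - 1 < ℓ) :
    finRotate ℓ ⟨ℓ - 1, hm'⟩ = ⟨0, hℓ⟩ := by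
  obtain ⟨ℓ, rfl⟩ := Nat.exists_eq_succ_of_ne_zero hℓ.ne'
  rw [finRotate_succ_apply]
  apply Fin.ext
  rw [Fin.val_add_one]
  have : (⟨ℓ + 1 - 1, hm'⟩ : Fin (ℓ + 1)) = Fin.last ℓ := by
    simp [Fin.ext_iff]
  simp [this, Fin.ext_iff]

theorem buildPerm_pow (f : Fin ℓ ↪ Fin n) (σ : Equiv.Perm {y : Fin n // y ∉ Set.range ⇑f})
    (hℓ : 0 < ℓ) : ∀ m (hm : m < ℓ), ((buildPerm f σ) ^ m) (f ⟨0, hℓ⟩) = f ⟨m, hm⟩ := by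
  intro m
  induction m with
  | zero => intro hm; simp
  | succ m ih =>
    intro hm
    rw [pow_succ', Equiv.Perm.mul_apply, ih (by omega), buildPerm_apply_mem,
      finRotate_mk hℓ m hm]

theorem buildPerm_pow_cycle (f : Fin ℓ ↪ Fin n) (σ : Equiv.Perm {y : Fin n // y ∉ Set.range ⇑f})
    (hℓ : 0 < ℓ) : ((buildPerm f σ) ^ ℓ) (f ⟨0, hℓ⟩) = f ⟨0, hℓ⟩ := by
  have h : (buildPerm f σ) ^ ℓ = (buildPerm f σ) ^ ((ℓ - 1) + 1) := by
    congr 1; omega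
  rw [h, pow_succ', Equiv.Perm.mul_apply, buildPerm_pow f σ hℓ (ℓ - 1) (by omega),
    buildPerm_apply_mem, finRotate_wrap hℓ]

theorem minimalPeriod_buildPerm (f : Fin ℓ ↪ Fin n)
    (σ : Equiv.Perm {y : Fin n // y ∉ Set.range ⇑f}) (hℓ : 0 < ℓ) :
    Function.minimalPeriod ⇑(buildPerm f σ) (f ⟨0, hℓ⟩) = ℓ := by
  have hper : Function.IsPeriodicPt ⇑(buildPerm f σ) ℓ (f ⟨0, hℓ⟩) := by
    rw [Function.IsPeriodicPt, Function.IsFixedPt, Equiv.Perm.iterate_eq_pow]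
    exact buildPerm_pow_cycle f σ hℓ
  have hle : Function.minimalPeriod ⇑(buildPerm f σ) (f ⟨0, hℓ⟩) ≤ ℓ :=
    hper.minimalPeriod_le hℓ
  have hpos : 0 < Function.minimalPeriod ⇑(buildPerm f σ) (f ⟨0, hℓ⟩) :=
    hper.minimalPeriod_pos hℓ
  by_contra hne
  have hlt : Function.minimalPeriod ⇑(buildPerm f σ) (f ⟨0, hℓ⟩) < ℓ := by omega
  have h2 := Function.iterate_minimalPeriod (f := ⇑(buildPerm f σ)) (x := f ⟨0, hℓ⟩)
  rw [Equiv.Perm.iterate_eq_pow, buildPerm_pow f σ hℓ _ hlt] at h2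
  have h3 := f.injective h2
  rw [Fin.ext_iff] at h3
  simp only at h3
  omega

theorem finRotate_eq_mod (hℓ : 0 < ℓ) (i : Fin ℓ) :
    finRotate ℓ i = ⟨(i.val + 1) % ℓ, Nat.mod_lt _ hℓ⟩ := by
  rcases lt_or_eq_of_le (Nat.succ_le_of_lt i.isLt) with h | h
  · have : (i.val + 1) % ℓ = i.val + 1 := Nat.mod_eq_of_lt h
    rw [show i = ⟨i.val, i.isLt⟩ from rfl, finRotate_mk hℓ i.val h i.isLt]
    simp [Fin.ext_iff, this]
  · have h0 : i.val = ℓ - 1 := by omega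
    have : (i.val + 1) % ℓ = 0 := by rw [h0]; simp [Nat.sub_add_cancel hℓ]
    rw [show i = ⟨ℓ - 1, by omega⟩ from (by simp [Fin.ext_iff, h0]), finRotate_wrap hℓ]
    have h2 : (ℓ - 1 + 1) % ℓ = 0 := by rw [Nat.sub_add_cancel hℓ]; simp
    simp [Fin.ext_iff, h2]

theorem perm_pow_inj (π : Equiv.Perm (Fin n)) (x : Fin n) {i j : ℕ}
    (hi : i < Function.minimalPeriod ⇑π x) (hj : j < Function.minimalPeriod ⇑π x)
    (hij : (π ^ i) x = (π ^ j) x) : i = j := by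
  wlog hle : i ≤ j generalizing i j
  · exact (this hj hi hij.symm (by omega)).symm
  by_contra hne
  have hd : 0 < j - i := by omega
  have key : (π ^ (j - i)) x = x := by
    have hcomm : (π ^ i) ((π ^ (j - i)) x) = (π ^ j) x := by
      rw [← Equiv.Perm.mul_apply, ← pow_add]
      congr 2
      omega
    apply (π ^ i).injective
    rw [hcomm, ← hij]
  have hper : Function.IsPeriodicPt ⇑π (j - i) x := by
    rw [Function.IsPeriodicPt, Function.IsFixedPt, Equiv.Perm.iterate_eq_pow]
    exact key
  have := hper.minimalPeriod_le hd
  omega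

/-- The cycle through `x`, as an embedding. -/
noncomputable def cycleEmb (π : Equiv.Perm (Fin n)) (x : Fin n)
    (h : Function.minimalPeriod ⇑π x = ℓ) : Fin ℓ ↪ Fin n :=
  ⟨fun i => (π ^ (i : ℕ)) x, by
    intro i j hij
    exact Fin.ext (perm_pow_inj π x (h ▸ i.isLt) (h ▸ j.isLt) hij)⟩

theorem pow_apply_mem_range_cycleEmb (π : Equiv.Perm (Fin n)) (x : Fin n) (hℓ : 0 < ℓ)
    (h : Function.minimalPeriod ⇑π x = ℓ) (m : ℕ) :
    (π ^ m) x ∈ Set.range ⇑(cycleEmb π x h) := by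
  refine ⟨⟨m % ℓ, Nat.mod_lt _ hℓ⟩, ?_⟩
  show (π ^ (m % ℓ)) x = (π ^ m) x
  have := Function.iterate_mod_minimalPeriod_eq (f := ⇑π) (x := x) (n := m)
  rw [h] at this
  rwa [← Equiv.Perm.iterate_eq_pow, ← Equiv.Perm.iterate_eq_pow]

theorem range_cycleEmb_inv (π : Equiv.Perm (Fin n)) (x : Fin n) (hℓ : 0 < ℓ)
    (h : Function.minimalPeriod ⇑π x = ℓ) (y : Fin n) :
    y ∉ Set.range ⇑(cycleEmb π x h) ↔ π y ∉ Set.range ⇑(cycleEmb π x h) := by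
  rw [not_iff_not]
  constructor
  · rintro ⟨i, rfl⟩
    show π ((π ^ (i : ℕ)) x) ∈ _
    rw [← Equiv.Perm.mul_apply, ← pow_succ']
    exact pow_apply_mem_range_cycleEmb π x hℓ h _
  · rintro ⟨i, hi⟩
    have hiy : (π ^ ((i : ℕ) + ℓ)) x = π y := by
      show (π ^ ((i : ℕ) + ℓ)) x = π y
      have hℓx : (π ^ ℓ) x = x := by
        have := Function.iterate_minimalPeriod (f := ⇑π) (x := x)
        rwa [Equiv.Perm.iterate_eq_pow, h] at this
      rw [pow_add, Equiv.Perm.mul_apply, hℓx]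
      exact hi
    have : π ((π ^ ((i : ℕ) + ℓ - 1)) x) = π y := by
      rw [← Equiv.Perm.mul_apply, ← pow_succ']
      rw [show (i : ℕ) + ℓ - 1 + 1 = (i : ℕ) + ℓ by omega]
      exact hiy
    have := π.injective this
    rw [← this]
    exact pow_apply_mem_range_cycleEmb π x hℓ h _

theorem card_compl_range (f : Fin ℓ ↪ Fin n) (hn : ℓ ≤ n) :
    Fintype.card {y : Fin n // y ∉ Set.range ⇑f} = n - ℓ := by
  have h1 : Fintype.card {y : Fin n // y ∈ Set.range ⇑f} = ℓ := by
    rw [Fintype.card_congr (Equiv.ofInjective ⇑f f.injective).symm, Fintype.card_fin]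
  rw [Fintype.card_subtype_compl, h1, Fintype.card_fin]

/-- A chosen equivalence between the complement of the range of `f` and `Fin (n - ℓ)`. -/
noncomputable def eC (f : Fin ℓ ↪ Fin n) (hn : ℓ ≤ n) :
    {y : Fin n // y ∉ Set.range ⇑f} ≃ Fin (n - ℓ) :=
  Fintype.equivFinOfCardEq (card_compl_range f hn)

theorem card_filter_minimalPeriod (x : Fin n) (hℓ : 0 < ℓ) (hn : ℓ ≤ n) :
    (Finset.univ.filter fun π : Equiv.Perm (Fin n) => Function.minimalPeriod ⇑π x = ℓ).card
      = (Finset.univ.filter fun f : Fin ℓ ↪ Fin n => f ⟨0, hℓ⟩ = x).card * Nat.factorial (n - ℓ) := by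
  have hcard : Nat.factorial (n - ℓ) = #(Finset.univ : Finset (Equiv.Perm (Fin (n - ℓ)))) := by
    rw [Finset.card_univ, Fintype.card_perm, Fintype.card_fin]
  rw [hcard, ← Finset.card_product]
  symm
  refine Finset.card_bij
    (fun a _ => buildPerm a.1 ((eC a.1 hn).permCongr.symm a.2)) ?_ ?_ ?_
  · rintro ⟨f, σ⟩ ha
    simp only [Finset.mem_product, Finset.mem_filter, Finset.mem_univ, true_and] at ha ⊢
    rw [← ha.1]
    exact minimalPeriod_buildPerm f _ hℓ
  · rintro ⟨f, σ⟩ ha ⟨f', σ'⟩ ha' hbb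
    simp only [Finset.mem_product, Finset.mem_filter, Finset.mem_univ, true_and] at ha ha'
    simp only at hbb
    have hf : f = f' := by
      apply DFunLike.ext
      intro i
      have h1 := buildPerm_pow f ((eC f hn).permCongr.symm σ) hℓ i.val i.isLt
      have h2 := buildPerm_pow f' ((eC f' hn).permCongr.symm σ') hℓ i.val i.isLt
      rw [ha.1] at h1
      rw [ha'.1] at h2
      rw [show (⟨i.val, i.isLt⟩ : Fin ℓ) = i from rfl] at h1 h2
      rw [← h1, ← h2, hbb]
    subst hf
    have hτ : (eC f hn).permCongr.symm σ = (eC f hn).permCongr.symm σ' := by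
      apply Equiv.ext
      rintro ⟨y, hy⟩
      apply Subtype.ext
      have h1 := buildPerm_apply_not_mem f ((eC f hn).permCongr.symm σ) hy
      have h2 := buildPerm_apply_not_mem f ((eC f hn).permCongr.symm σ') hy
      rw [← h1, ← h2, hbb]
    have := congrArg (fun τ => (eC f hn).permCongr τ) hτ
    simpa using this
  · intro π hπ
    simp only [Finset.mem_filter, Finset.mem_univ, true_and] at hπ
    refine ⟨⟨cycleEmb π x hπ, (eC (cycleEmb π x hπ) hn).permCongr
      (π.subtypePerm (fun y => (range_cycleEmb_inv π x hℓ hπ y).symm))⟩, ?_, ?_⟩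
    · simp only [Finset.mem_product, Finset.mem_filter, Finset.mem_univ, true_and, and_true]
      show (π ^ (0 : ℕ)) x = x
      simp
    · simp only [Equiv.symm_apply_apply]
      apply Equiv.ext
      intro y
      by_cases hy : y ∈ Set.range ⇑(cycleEmb π x hπ)
      · obtain ⟨i, rfl⟩ := hy
        rw [buildPerm_apply_mem, finRotate_eq_mod hℓ]
        show (π ^ (((i : ℕ) + 1) % ℓ)) x = π ((π ^ (i : ℕ)) x)
        have hmod : (π ^ (((i : ℕ) + 1) % ℓ)) x = (π ^ ((i : ℕ) + 1)) x := by
          have := Function.iterate_mod_minimalPeriod_eq (f := ⇑π) (x := x) (n := (i : ℕ) + 1)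
          rw [hπ] at this
          rwa [← Equiv.Perm.iterate_eq_pow, ← Equiv.Perm.iterate_eq_pow]
        rw [hmod, pow_succ']
        rfl
      · rw [buildPerm_apply_not_mem _ _ hy]
        rfl

theorem card_emb_fiber (hℓ : 0 < ℓ) (hn : ℓ ≤ n) (x : Fin n) :
    #(Finset.univ.filter fun f : Fin ℓ ↪ Fin n => f ⟨0, hℓ⟩ = x)
      = (n - 1).descFactorial (ℓ - 1) := by
  have hfib : ∀ y : Fin n,
      #(Finset.univ.filter fun f : Fin ℓ ↪ Fin n => f ⟨0, hℓ⟩ = y)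
        = #(Finset.univ.filter fun f : Fin ℓ ↪ Fin n => f ⟨0, hℓ⟩ = x) := by
    intro y
    refine Finset.card_bij (fun f _ => f.trans (Equiv.swap y x).toEmbedding) ?_ ?_ ?_
    · intro f hf
      simp only [Finset.mem_filter, Finset.mem_univ, true_and] at hf ⊢
      simp [Function.Embedding.trans_apply, hf, Equiv.swap_apply_left]
    · intro f _ f' _ hff
      apply DFunLike.ext
      intro i
      have := DFunLike.congr_fun hff i
      simp only [Function.Embedding.trans_apply, Equiv.coe_toEmbedding] at this
      exact (Equiv.swap y x).injective this
    · intro g hg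
      simp only [Finset.mem_filter, Finset.mem_univ, true_and] at hg
      refine ⟨g.trans (Equiv.swap y x).toEmbedding, ?_, ?_⟩
      · simp [Function.Embedding.trans_apply, hg, Equiv.swap_apply_right]
      · apply DFunLike.ext
        intro i
        simp [Function.Embedding.trans_apply, Equiv.swap_apply_self]
  have hsum : (Finset.univ : Finset (Fin ℓ ↪ Fin n)).card
      = ∑ y : Fin n, #(Finset.univ.filter fun f : Fin ℓ ↪ Fin n => f ⟨0, hℓ⟩ = y) :=
    Finset.card_eq_sum_card_fiberwise (fun f _ => Finset.mem_univ _)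
  rw [Finset.card_univ, Fintype.card_embedding_eq, Fintype.card_fin, Fintype.card_fin] at hsum
  simp only [hfib] at hsum
  rw [Finset.sum_const, Finset.card_univ, Fintype.card_fin, smul_eq_mul] at hsum
  obtain ⟨m, rfl⟩ := Nat.exists_eq_succ_of_ne_zero (by omega : n ≠ 0)
  obtain ⟨l, rfl⟩ := Nat.exists_eq_succ_of_ne_zero hℓ.ne'
  rw [Nat.succ_descFactorial_succ] at hsum
  have := Nat.eq_of_mul_eq_mul_left (Nat.succ_pos m) hsum
  simpa using this.symm

theorem card_filter_minimalPeriod_eq_fact (x : Fin n) (hℓ : 0 < ℓ) (hn : ℓ ≤ n) :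
    #(Finset.univ.filter fun π : Equiv.Perm (Fin n) => Function.minimalPeriod ⇑π x = ℓ)
      = Nat.factorial (n - 1) := by
  rw [card_filter_minimalPeriod x hℓ hn, card_emb_fiber hℓ hn x]
  have h1 : ℓ - 1 ≤ n - 1 := by omega
  have h2 := Nat.factorial_mul_descFactorial h1
  rw [show n - 1 - (ℓ - 1) = n - ℓ by omega] at h2
  rw [mul_comm, h2]

theorem card_filter_dvd (x : Fin n) {k : ℕ} (hk : 0 < k) (hn : k ≤ n) :
    #(Finset.univ.filter fun π : Equiv.Perm (Fin n) => Function.minimalPeriod ⇑π x ∣ k)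
      = k.divisors.card * Nat.factorial (n - 1) := by
  have hsum : #(Finset.univ.filter
        fun π : Equiv.Perm (Fin n) => Function.minimalPeriod ⇑π x ∣ k)
      = ∑ ℓ' ∈ k.divisors, #((Finset.univ.filter
          fun π : Equiv.Perm (Fin n) => Function.minimalPeriod ⇑π x ∣ k).filter
          fun π : Equiv.Perm (Fin n) => Function.minimalPeriod ⇑π x = ℓ') :=
    Finset.card_eq_sum_card_fiberwise
      (fun π hπ => Nat.mem_divisors.mpr ⟨(Finset.mem_filter.mp hπ).2, hk.ne'⟩)
  have hterm : ∀ ℓ' ∈ k.divisors, #((Finset.univ.filter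
        fun π : Equiv.Perm (Fin n) => Function.minimalPeriod ⇑π x ∣ k).filter
        fun π : Equiv.Perm (Fin n) => Function.minimalPeriod ⇑π x = ℓ')
      = Nat.factorial (n - 1) := by
    intro ℓ' hℓ'
    obtain ⟨hdvd, -⟩ := Nat.mem_divisors.mp hℓ'
    have hℓpos : 0 < ℓ' := Nat.pos_of_mem_divisors hℓ'
    have hℓn : ℓ' ≤ n := le_trans (Nat.le_of_dvd hk hdvd) hn
    have heq : ((Finset.univ.filter
          fun π : Equiv.Perm (Fin n) => Function.minimalPeriod ⇑π x ∣ k).filter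
          fun π : Equiv.Perm (Fin n) => Function.minimalPeriod ⇑π x = ℓ')
        = Finset.univ.filter
          fun π : Equiv.Perm (Fin n) => Function.minimalPeriod ⇑π x = ℓ' := by
      ext π
      simp only [Finset.mem_filter, Finset.mem_univ, true_and]
      exact ⟨fun h => h.2, fun h => ⟨h ▸ hdvd, h⟩⟩
    rw [heq]
    exact card_filter_minimalPeriod_eq_fact x hℓpos hℓn
  rw [hsum, Finset.sum_congr rfl hterm, Finset.sum_const, smul_eq_mul]

end

/-- For a uniformly random permutation of an `n`-element set with `n ≥ k`, the expected
number of points lying in cycles of length dividing `k` is exactly `τ(k)`, the number of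
positive divisors of `k`. -/
theorem expected_points_in_cycles_dvd (n k : ℕ) (hk : 0 < k) (hn : k ≤ n) :
    (∑ π : Equiv.Perm (Fin n),
        (({x : Fin n | (MulAction.orbit (Subgroup.zpowers π) x).ncard ∣ k}.ncard : ℚ)))
        / n.factorial
      = (Nat.divisors k).card := by
  classical
  have hn0 : 0 < n := lt_of_lt_of_le hk hn
  have horb : ∀ (π : Equiv.Perm (Fin n)) (x : Fin n),
      (MulAction.orbit (Subgroup.zpowers π) x).ncard = Function.minimalPeriod ⇑π x := by
    intro π x
    rw [Set.ncard_eq_toFinset_card', Set.toFinset_card]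
    rw [show (⇑π) = (π • ·) from rfl, MulAction.minimalPeriod_eq_card]
  have hstep : ∀ π : Equiv.Perm (Fin n),
      ({x : Fin n | (MulAction.orbit (Subgroup.zpowers π) x).ncard ∣ k}.ncard : ℚ)
        = ∑ x : Fin n, if Function.minimalPeriod ⇑π x ∣ k then (1 : ℚ) else 0 := by
    intro π
    have h1 : {x : Fin n | (MulAction.orbit (Subgroup.zpowers π) x).ncard ∣ k}
        = {x : Fin n | Function.minimalPeriod ⇑π x ∣ k} := by
      ext x; simp [horb π x]
    rw [h1, Set.ncard_eq_toFinset_card', Set.toFinset_setOf, Finset.card_filter]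
    push_cast
    rfl
  simp only [hstep]
  rw [Finset.sum_comm]
  have hinner : ∀ x : Fin n,
      (∑ π : Equiv.Perm (Fin n), if Function.minimalPeriod ⇑π x ∣ k then (1 : ℚ) else 0)
        = ((k.divisors.card * Nat.factorial (n - 1) : ℕ) : ℚ) := by
    intro x
    rw [← card_filter_dvd x hk hn, Finset.card_filter]
    push_cast
    rfl
  simp only [hinner]
  rw [Finset.sum_const, Finset.card_univ, Fintype.card_fin, nsmul_eq_mul]
  have hne : ((n.factorial : ℚ)) ≠ 0 := Nat.cast_ne_zero.mpr (Nat.factorial_ne_zero n)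
  have hfac : (n : ℚ) * ((n - 1).factorial : ℚ) = (n.factorial : ℚ) := by
    rw [← Nat.cast_mul, Nat.mul_factorial_pred hn0.ne']
  rw [div_eq_iff hne, ← hfac]
  push_cast
  ring
end

section
/- The probability that a uniformly random permutation of n elements has no cycle of length k tends to e^{-1/k} as n → ∞. -/
set_option linter.unusedSectionVars false
set_option linter.unusedVariables false

open Filter Finset Equiv Equiv.Perm
namespace ProbNoK

noncomputable section

/-- the no-`k`-orbit property -/
def Q (k : ℕ) {α : Type*} (σ : Equiv.Perm α) : Prop :=
  ∀ x : α, (MulAction.orbit (Subgroup.zpowers σ) x).ncard ≠ k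

variable {α β : Type*}

lemma orbit_eq_sameCycle (σ : Perm α) (x : α) :
    MulAction.orbit (Subgroup.zpowers σ) x = {y | σ.SameCycle x y} := by
  ext y
  constructor
  · rintro ⟨⟨g, i, rfl⟩, rfl⟩
    exact ⟨i, rfl⟩
  · rintro ⟨i, rfl⟩
    exact ⟨⟨σ ^ i, i, rfl⟩, rfl⟩

lemma orbit_subtypePerm {p : α → Prop} (σ : Perm α) (h : ∀ x, p x ↔ p (σ x)) (x : Subtype p) :
    MulAction.orbit (Subgroup.zpowers σ) (x : α)
      = Subtype.val '' MulAction.orbit (Subgroup.zpowers (σ.subtypePerm (fun x => (h x).symm))) x := by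
  rw [orbit_eq_sameCycle, orbit_eq_sameCycle]
  ext y
  constructor
  · rintro ⟨i, rfl⟩
    exact ⟨(σ.subtypePerm (fun x => (h x).symm) ^ i) x, ⟨i, rfl⟩, by rw [Equiv.Perm.subtypePerm_zpow]; rfl⟩
  · rintro ⟨z, ⟨i, rfl⟩, rfl⟩
    exact ⟨i, by rw [Equiv.Perm.subtypePerm_zpow]; rfl⟩

lemma orbit_ncard_subtypePerm {p : α → Prop} (σ : Perm α) (h : ∀ x, p x ↔ p (σ x))
    (x : Subtype p) :
    (MulAction.orbit (Subgroup.zpowers (σ.subtypePerm (fun x => (h x).symm))) x).ncard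
      = (MulAction.orbit (Subgroup.zpowers σ) (x : α)).ncard := by
  rw [orbit_subtypePerm σ h x, Set.ncard_image_of_injective _ Subtype.val_injective]

lemma Q_subtypePerm {k : ℕ} (σ : Perm α) {p : α → Prop} (h : ∀ x, p x ↔ p (σ x))
    (hQ : Q k σ) : Q k (σ.subtypePerm (fun x => (h x).symm)) := by
  intro x
  rw [orbit_ncard_subtypePerm σ h]
  exact hQ _

/-- conjugation by an equiv, as a `MulEquiv` -/
def permCongrMul (e : α ≃ β) : Perm α ≃* Perm β :=
  { e.permCongr with
    map_mul' := fun σ τ => by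
      ext b
      simp [Equiv.permCongr_apply, Equiv.Perm.mul_apply] }

lemma permCongrMul_zpow (e : α ≃ β) (σ : Perm α) (i : ℤ) :
    (e.permCongr σ) ^ i = e.permCongr (σ ^ i) := by
  have := map_zpow (permCongrMul e) σ i
  simpa [permCongrMul] using this.symm

lemma orbit_permCongr (e : α ≃ β) (σ : Perm α) (x : α) :
    MulAction.orbit (Subgroup.zpowers (e.permCongr σ)) (e x)
      = e '' MulAction.orbit (Subgroup.zpowers σ) x := by
  rw [orbit_eq_sameCycle, orbit_eq_sameCycle]
  ext y
  constructor
  · rintro ⟨i, rfl⟩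
    exact ⟨(σ ^ i) x, ⟨i, rfl⟩, by rw [permCongrMul_zpow]; simp [Equiv.permCongr_apply]⟩
  · rintro ⟨z, ⟨i, rfl⟩, rfl⟩
    exact ⟨i, by rw [permCongrMul_zpow]; simp [Equiv.permCongr_apply]⟩

lemma Q_permCongr (k : ℕ) (e : α ≃ β) (σ : Perm α) : Q k (e.permCongr σ) ↔ Q k σ := by
  constructor
  · intro h x
    have := h (e x)
    rwa [orbit_permCongr, Set.ncard_image_of_injective _ e.injective] at this
  · intro h y
    have h2 := h (e.symm y)
    have hy : y = e (e.symm y) := (e.apply_symm_apply y).symm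
    rw [hy, orbit_permCongr, Set.ncard_image_of_injective _ e.injective]
    exact h2

/-- number of permutations with no orbit of size `k` -/
def N (k : ℕ) (α : Type*) : ℕ := Nat.card {σ : Perm α // Q k σ}

lemma N_congr (k : ℕ) (e : α ≃ β) : N k α = N k β := by
  refine Nat.card_congr (Equiv.subtypeEquiv (e.permCongr) ?_)
  intro σ
  exact (Q_permCongr k e σ).symm

lemma card_filter_univ {γ : Type*} [Fintype γ] {p : γ → Prop} [DecidablePred p] :
    (Finset.univ.filter p).card = Nat.card {x // p x} := by
  rw [Nat.card_eq_fintype_card, Fintype.card_subtype]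

variable [Fintype α] [DecidableEq α]

lemma orbit_ncard (σ : Perm α) (x : α) :
    (MulAction.orbit (Subgroup.zpowers σ) x).ncard
      = if x ∈ σ.support then (σ.cycleOf x).support.card else 1 := by
  rw [orbit_eq_sameCycle]
  by_cases hx : x ∈ σ.support
  · rw [if_pos hx]
    have h : {y | σ.SameCycle x y} = ((σ.cycleOf x).support : Set α) := by
      ext y
      simp only [Finset.mem_coe, Equiv.Perm.mem_support_cycleOf_iff, Set.mem_setOf_eq]
      tauto
    rw [h, Set.ncard_coe_finset]
  · rw [if_neg hx]
    rw [Equiv.Perm.notMem_support] at hx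
    have h : {y | σ.SameCycle x y} = {x} := by
      ext y
      simp only [Set.mem_setOf_eq, Set.mem_singleton_iff]
      constructor
      · rintro ⟨i, rfl⟩
        rw [zpow_apply_eq_self_of_apply_eq_self hx]
      · rintro rfl
        exact ⟨0, rfl⟩
    rw [h, Set.ncard_singleton]

section Fiber

variable (k : ℕ) (a : α) (l : List α)

/-- a possible value of `toList σ a` -/
def Good : Prop :=
  l = [] ∨ ((∃ t, l = a :: t) ∧ l.Nodup ∧ 2 ≤ l.length)

/-- the orbit of `a` as a list -/
def ext0 : List α := if l = [] then [a] else l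

variable {a l}

lemma mem_ext0 (hl : Good a l) : a ∈ ext0 a l := by
  rcases hl with h | ⟨⟨t, rfl⟩, _⟩
  · simp [ext0, h]
  · simp [ext0]

lemma mem_ext0_of_mem {x : α} (hx : x ∈ l) : x ∈ ext0 a l := by
  unfold ext0
  split
  · simp_all
  · exact hx

lemma not_mem_of_not_mem_ext0 {x : α} (hx : x ∉ ext0 a l) : x ∉ l :=
  fun h => hx (mem_ext0_of_mem h)

lemma nodup_ext0 (hl : Good a l) : (ext0 a l).Nodup := by
  unfold ext0
  split
  · simp
  · rcases hl with h | ⟨_, h, _⟩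
    · simp_all
    · exact h

lemma length_ext0 : (ext0 a l).length = if l = [] then 1 else l.length := by
  unfold ext0; split <;> simp

lemma formPerm_fix (hl : Good a l) {x : α} (hx : x ∉ ext0 a l) : l.formPerm x = x :=
  List.formPerm_apply_of_notMem (not_mem_of_not_mem_ext0 hx)

lemma formPerm_mem (hl : Good a l) {x : α} (hx : x ∈ ext0 a l) : l.formPerm x ∈ ext0 a l := by
  rcases hl with h | ⟨⟨t, rfl⟩, _⟩
  · subst h; simpa using hx
  · exact mem_ext0_of_mem (List.formPerm_apply_mem_of_mem (by simpa [ext0] using hx))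

lemma inv_of_toList (σ : Perm α) (htl : σ.toList a = l) (x : α) :
    x ∉ ext0 a l ↔ σ x ∉ ext0 a l := by
  unfold ext0
  by_cases hnil : l = []
  · subst hnil
    rw [Equiv.Perm.toList_eq_nil_iff, Equiv.Perm.notMem_support] at htl
    rw [if_pos rfl]
    simp only [List.mem_singleton, not_iff_not]
    constructor
    · rintro rfl
      exact htl
    · intro h
      exact σ.injective (h.trans htl.symm)
  · have ha : a ∈ σ.support := by
      by_contra h
      exact hnil (by rw [← htl]; exact Equiv.Perm.toList_eq_nil_iff.mpr h)
    have hmem : ∀ y : α, y ∈ l ↔ σ.SameCycle a y := by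
      intro y
      rw [← htl, Equiv.Perm.mem_toList_iff]
      simp [ha]
    simp only [if_neg hnil]
    rw [not_iff_not, hmem, hmem, Equiv.Perm.sameCycle_apply_right]

section BackMaps

variable (hl : Good a l)

include hl

lemma disj_back (τ : Equiv.Perm {x : α // x ∉ ext0 a l}) :
    Equiv.Perm.Disjoint l.formPerm (Equiv.Perm.ofSubtype τ) := by
  intro x
  by_cases hx : x ∈ ext0 a l
  · right
    exact Equiv.Perm.ofSubtype_apply_of_not_mem τ (by simpa using hx)
  · left
    exact formPerm_fix hl hx

lemma back_apply_mem (τ : Equiv.Perm {x : α // x ∉ ext0 a l}) {x : α} (hx : x ∈ ext0 a l) :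
    (l.formPerm * Equiv.Perm.ofSubtype τ) x = l.formPerm x := by
  rw [Equiv.Perm.mul_apply, Equiv.Perm.ofSubtype_apply_of_not_mem τ (by simpa using hx)]

lemma back_apply_not_mem (τ : Equiv.Perm {x : α // x ∉ ext0 a l}) {x : α} (hx : x ∉ ext0 a l) :
    (l.formPerm * Equiv.Perm.ofSubtype τ) x = (τ ⟨x, hx⟩ : α) := by
  rw [Equiv.Perm.mul_apply, Equiv.Perm.ofSubtype_apply_of_mem τ hx]
  exact formPerm_fix hl (τ ⟨x, hx⟩).2

lemma back_inv (τ : Equiv.Perm {x : α // x ∉ ext0 a l}) (x : α) :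
    x ∉ ext0 a l ↔ (l.formPerm * Equiv.Perm.ofSubtype τ) x ∉ ext0 a l := by
  constructor
  · intro hx
    rw [back_apply_not_mem hl τ hx]
    exact (τ ⟨x, hx⟩).2
  · intro hx
    by_contra h
    rw [back_apply_mem hl τ h] at hx
    exact hx (formPerm_mem hl h)

lemma back_subtypePerm (τ : Equiv.Perm {x : α // x ∉ ext0 a l}) :
    (l.formPerm * Equiv.Perm.ofSubtype τ).subtypePerm (fun x => (back_inv hl τ x).symm) = τ := by
  ext x
  simp only [Equiv.Perm.subtypePerm_apply]
  rw [back_apply_not_mem hl τ x.2]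

lemma back_pow_mem (j : ℕ) : (l.formPerm ^ j) a ∈ ext0 a l := by
  induction j with
  | zero => simpa using mem_ext0 hl
  | succ j ih =>
      rw [pow_succ', Equiv.Perm.mul_apply]
      exact formPerm_mem hl ih

lemma back_pow (τ : Equiv.Perm {x : α // x ∉ ext0 a l}) (j : ℕ) :
    ((l.formPerm * Equiv.Perm.ofSubtype τ) ^ j) a = (l.formPerm ^ j) a := by
  induction j with
  | zero => simp
  | succ j ih =>
      rw [pow_succ', Equiv.Perm.mul_apply, ih, back_apply_mem hl τ (back_pow_mem hl j),
        ← Equiv.Perm.mul_apply, ← pow_succ']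

lemma back_toList (τ : Equiv.Perm {x : α // x ∉ ext0 a l}) :
    (l.formPerm * Equiv.Perm.ofSubtype τ).toList a = l := by
  rcases id hl with hnil | ⟨⟨t, hlt⟩, hn, h2⟩
  · subst hnil
    rw [Equiv.Perm.toList_eq_nil_iff, Equiv.Perm.notMem_support]
    rw [back_apply_mem hl τ (mem_ext0 hl)]
    simp
  · have hsing : ∀ x : α, l ≠ [x] := by
      intro x h
      rw [h] at h2
      simp at h2
    have hsupp : l.formPerm.support = l.toFinset :=
      List.support_formPerm_of_nodup l hn hsing
    have hcyc : l.formPerm.IsCycle := List.isCycle_formPerm hn h2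
    have hal : a ∈ l := by rw [hlt]; simp
    have hfa : l.formPerm a ≠ a := by
      have : a ∈ l.formPerm.support := by rw [hsupp]; simpa using hal
      exact Equiv.Perm.mem_support.mp this
    have hofa : Equiv.Perm.ofSubtype τ a = a :=
      Equiv.Perm.ofSubtype_apply_of_not_mem τ (by simpa using mem_ext0 hl)
    have hcycleOf2 : l.formPerm.cycleOf a = l.formPerm := hcyc.cycleOf_eq hfa
    have hcycleOf : (l.formPerm * Equiv.Perm.ofSubtype τ).cycleOf a = l.formPerm := by
      rw [Equiv.Perm.cycleOf_mul_of_apply_right_eq_self (disj_back hl τ).commute a hofa]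
      exact hcycleOf2
    have hkey : (l.formPerm * Equiv.Perm.ofSubtype τ).toList a = l.formPerm.toList a := by
      unfold Equiv.Perm.toList
      rw [hcycleOf, hcycleOf2]
      apply List.ext_getElem (by simp)
      intro j h1 h2
      rw [List.getElem_iterate, List.getElem_iterate, ← Equiv.Perm.coe_pow, ← Equiv.Perm.coe_pow]
      exact back_pow hl τ j
    rw [hkey]
    have hres := Equiv.Perm.toList_formPerm_nontrivial l h2 hn
    have h0 : l.get ⟨0, by omega⟩ = a := by
      subst hlt
      rfl
    rwa [h0] at hres

lemma back_Q (hlk : (if l = [] then 1 else l.length) ≠ k)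
    {τ : Equiv.Perm {x : α // x ∉ ext0 a l}} (hτ : Q k τ) :
    Q k (l.formPerm * Equiv.Perm.ofSubtype τ) := by
  set σ' := l.formPerm * Equiv.Perm.ofSubtype τ with hσ'
  intro x
  by_cases hx : x ∈ ext0 a l
  · rcases id hl with hnil | ⟨⟨t, hlt⟩, hn, h2⟩
    · subst hnil
      have hxa : x = a := by simpa [ext0] using hx
      subst hxa
      have hfix : σ' x = x := by
        rw [back_apply_mem hl τ hx]
        simp
      rw [orbit_ncard, if_neg (by rwa [Equiv.Perm.notMem_support])]
      simpa using hlk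
    · have hx' : x ∈ l := by
        simpa [ext0, (by rw [hlt]; simp : l ≠ [])] using hx
      have hcyc : l.formPerm.IsCycle := List.isCycle_formPerm hn h2
      have hsing : ∀ y : α, l ≠ [y] := by
        intro y h
        rw [h] at h2
        simp at h2
      have hsupp : l.formPerm.support = l.toFinset :=
        List.support_formPerm_of_nodup l hn hsing
      have hal : a ∈ l := by rw [hlt]; simp
      have hfa : l.formPerm a ≠ a :=
        Equiv.Perm.mem_support.mp (by rw [hsupp]; simpa using hal)
      have hofa : Equiv.Perm.ofSubtype τ a = a :=
        Equiv.Perm.ofSubtype_apply_of_not_mem τ (by simpa using mem_ext0 hl)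
      have hcycleOf : σ'.cycleOf a = l.formPerm := by
        rw [hσ', Equiv.Perm.cycleOf_mul_of_apply_right_eq_self (disj_back hl τ).commute a hofa]
        exact hcyc.cycleOf_eq hfa
      have hxsupp : x ∈ (σ'.cycleOf a).support := by
        rw [hcycleOf, hsupp]
        simpa using hx'
      obtain ⟨hsc, hasup⟩ := Equiv.Perm.mem_support_cycleOf_iff.mp hxsupp
      have horb : MulAction.orbit (Subgroup.zpowers σ') x = MulAction.orbit (Subgroup.zpowers σ') a := by
        rw [MulAction.orbit_eq_iff]
        rw [orbit_eq_sameCycle]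
        exact hsc
      rw [horb, orbit_ncard, if_pos hasup, hcycleOf, hsupp,
        List.toFinset_card_of_nodup hn]
      simpa [(by rw [hlt]; simp : l ≠ [])] using hlk
  · have horb := orbit_subtypePerm σ' (back_inv hl τ) ⟨x, hx⟩
    rw [back_subtypePerm hl τ] at horb
    show (MulAction.orbit (Subgroup.zpowers σ') ((⟨x, hx⟩ : {x : α // x ∉ ext0 a l}) : α)).ncard ≠ k
    rw [horb, Set.ncard_image_of_injective _ Subtype.val_injective]
    exact hτ _

end BackMaps

lemma forward_back (σ : Equiv.Perm α) (htl : σ.toList a = l) :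
    l.formPerm * Equiv.Perm.ofSubtype (σ.subtypePerm (p := fun y => y ∉ ext0 a l) (fun x => (inv_of_toList σ htl x).symm)) = σ := by
  ext x
  by_cases hx : x ∈ ext0 a l
  · rw [Equiv.Perm.mul_apply, Equiv.Perm.ofSubtype_apply_of_not_mem _ (by simpa using hx)]
    by_cases hnil : l = []
    · subst hnil
      have hxa : x = a := by simpa [ext0] using hx
      subst hxa
      have haa : σ x = x := by
        rw [Equiv.Perm.toList_eq_nil_iff, Equiv.Perm.notMem_support] at htl
        exact htl
      simp [haa]
    · have hx' : x ∈ l := by simpa [ext0, hnil] using hx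
      have hform : l.formPerm = σ.cycleOf a := by rw [← htl, Equiv.Perm.formPerm_toList]
      rw [hform]
      have hsc : σ.SameCycle a x := by
        rw [← htl] at hx'
        exact (Equiv.Perm.mem_toList_iff.mp hx').1
      exact hsc.cycleOf_apply
  · rw [Equiv.Perm.mul_apply, Equiv.Perm.ofSubtype_apply_of_mem (p := fun y => y ∉ ext0 a l) _ hx]
    have h2 : σ x ∉ ext0 a l := (inv_of_toList σ htl x).mp hx
    simp only [Equiv.Perm.subtypePerm_apply]
    exact List.formPerm_apply_of_notMem (not_mem_of_not_mem_ext0 h2)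



/-- the fiber equivalence -/
def fiberEquiv (hl : Good a l) (hlk : (if l = [] then 1 else l.length) ≠ k) :
    {σ : Equiv.Perm α // Q k σ ∧ σ.toList a = l}
      ≃ {τ : Equiv.Perm {x : α // x ∉ ext0 a l} // Q k τ} where
  toFun := fun σp => ⟨σp.val.subtypePerm (fun x => (inv_of_toList σp.val σp.2.2 x).symm),
    Q_subtypePerm σp.val (fun x => inv_of_toList σp.val σp.2.2 x) σp.2.1⟩
  invFun := fun τp => ⟨l.formPerm * Equiv.Perm.ofSubtype τp.val,
    back_Q (k := k) (hl := hl) (hlk := hlk) τp.2, back_toList hl τp.val⟩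
  left_inv := fun σp => Subtype.ext (forward_back σp.val σp.2.2)
  right_inv := fun τp => Subtype.ext (back_subtypePerm hl τp.val)

end Fiber

section Count

variable (k : ℕ) {α : Type*} [Fintype α] [DecidableEq α] (a : α)

/-- candidate lists for the orbit of `a`, of orbit-size `ℓ` -/
def Gl (ℓ : ℕ) : Finset (List α) :=
  if ℓ = 1 then {[]}
  else (Finset.univ : Finset (Fin (ℓ - 1) ↪ {x : α // x ≠ a})).image
    (fun f => a :: List.ofFn (fun i => (f i : α)))

lemma card_Gl (ℓ : ℕ) : (Gl a ℓ).card = (Fintype.card α - 1).descFactorial (ℓ - 1) := by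
  unfold Gl
  split
  · rename_i h
    subst h
    simp
  · have hinj : Function.Injective
        (fun f : Fin (ℓ - 1) ↪ {x : α // x ≠ a} => a :: List.ofFn (fun i => (f i : α))) := by
      intro f g h
      simp only [List.cons.injEq, List.ofFn_inj, true_and] at h
      ext i
      exact congrFun h i
    rw [Finset.card_image_of_injective _ hinj, Finset.card_univ, Fintype.card_embedding_eq,
      Fintype.card_fin]
    congr 1
    rw [Fintype.card_subtype_compl, Fintype.card_subtype_eq]

lemma good_of_mem_Gl {ℓ : ℕ} (h1 : 1 ≤ ℓ) {l : List α} (hl : l ∈ Gl a ℓ) :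
    Good a l ∧ (if l = [] then 1 else l.length) = ℓ := by
  unfold Gl at hl
  split at hl
  · rename_i h
    subst h
    simp only [Finset.mem_singleton] at hl
    subst hl
    exact ⟨Or.inl rfl, rfl⟩
  · rename_i h
    have h2 : 2 ≤ ℓ := by omega
    obtain ⟨f, -, rfl⟩ := Finset.mem_image.mp hl
    constructor
    · refine Or.inr ⟨⟨_, rfl⟩, ?_, ?_⟩
      · rw [List.nodup_cons]
        constructor
        · intro hmem
          obtain ⟨i, hi⟩ := List.mem_ofFn.mp hmem
          exact (f i).2 hi
        · exact List.nodup_ofFn.mpr (Subtype.val_injective.comp f.injective)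
      · simp only [List.length_cons, List.length_ofFn]
        omega
    · simp only [List.length_cons, List.length_ofFn, if_neg (List.cons_ne_nil _ _)]
      omega

lemma toList_mem_Gl (σ : Equiv.Perm α) :
    σ.toList a ∈ Gl a (if σ.toList a = [] then 1 else (σ.toList a).length) := by
  by_cases hnil : σ.toList a = []
  · rw [if_pos hnil, hnil]
    simp [Gl]
  · rw [if_neg hnil]
    set l := σ.toList a with hl
    have hn : l.Nodup := Equiv.Perm.nodup_toList σ a
    have hsup : a ∈ σ.support := by
      by_contra h
      exact hnil (Equiv.Perm.toList_eq_nil_iff.mpr h)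
    have hlen2 : 2 ≤ l.length := Equiv.Perm.two_le_length_toList_iff_mem_support.mpr hsup
    have hne : l ≠ [] := hnil
    have hcons : l = a :: l.tail := by
      conv_lhs => rw [← List.cons_head_tail hne]
      congr 1
      have h0 := Equiv.Perm.toList_getElem_zero σ a hsup
      rw [List.head_eq_getElem_zero hne]
      exact h0
    have hℓ : l.length ≠ 1 := by omega
    unfold Gl
    rw [if_neg hℓ]
    have htn : a ∉ l.tail := by
      have := hcons ▸ hn
      exact (List.nodup_cons.mp this).1
    have htlen : l.tail.length = l.length - 1 := by
      rw [List.length_tail]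
    refine Finset.mem_image.mpr ⟨⟨fun i => ⟨l.tail.get (Fin.cast htlen.symm i), ?_⟩, ?_⟩, Finset.mem_univ _, ?_⟩
    · intro h
      apply htn
      rw [← h]
      exact List.mem_iff_get.mpr ⟨_, rfl⟩
    · intro i j hij
      have htnodup : l.tail.Nodup := (List.nodup_cons.mp (hcons ▸ hn)).2
      have hinj := List.nodup_iff_injective_get.mp htnodup
      have := hinj (Subtype.mk_eq_mk.mp hij)
      simpa [Fin.ext_iff] using this
    · calc a :: List.ofFn (fun i : Fin (l.length - 1) => l.tail.get (Fin.cast htlen.symm i))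
          = a :: List.ofFn l.tail.get := by rw [← List.ofFn_congr htlen l.tail.get]
        _ = a :: l.tail := by rw [List.ofFn_get]
        _ = l := hcons.symm

lemma N_rec (a : α) : N k α
    = ∑ ℓ ∈ (Finset.Icc 1 (Fintype.card α)).filter (· ≠ k),
      (Fintype.card α - 1).descFactorial (ℓ - 1) * N k (Fin (Fintype.card α - ℓ)) := by
  classical
  rw [N, ← card_filter_univ]
  set s := Finset.univ.filter (fun σ : Equiv.Perm α => Q k σ) with hs
  set K := (Finset.Icc 1 (Fintype.card α)).filter (· ≠ k) with hK
  rw [Finset.card_eq_sum_card_image (fun σ : Equiv.Perm α => σ.toList a) s]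
  have himage : s.image (fun σ : Equiv.Perm α => σ.toList a) ⊆ K.biUnion (Gl a) := by
    intro l hl
    obtain ⟨σ, hσ, rfl⟩ := Finset.mem_image.mp hl
    have hQ : Q k σ := (Finset.mem_filter.mp hσ).2
    set ℓ := if σ.toList a = [] then 1 else (σ.toList a).length with hℓ
    have hQa := hQ a
    rw [orbit_ncard] at hQa
    have hℓa : ℓ ≠ k := by
      by_cases hsup : a ∈ σ.support
      · have hne : σ.toList a ≠ [] := by
          simpa [Equiv.Perm.toList_eq_nil_iff] using hsup
        rw [if_pos hsup] at hQa
        rw [hℓ, if_neg hne, Equiv.Perm.length_toList]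
        exact hQa
      · have hne : σ.toList a = [] := Equiv.Perm.toList_eq_nil_iff.mpr hsup
        rw [if_neg hsup] at hQa
        rw [hℓ, if_pos hne]
        exact hQa
    refine Finset.mem_biUnion.mpr ⟨ℓ, ?_, toList_mem_Gl a σ⟩
    rw [hK, Finset.mem_filter, Finset.mem_Icc]
    have hle : 1 ≤ ℓ ∧ ℓ ≤ Fintype.card α := by
      by_cases hne : σ.toList a = []
      · rw [hℓ, if_pos hne]
        exact ⟨le_refl 1, Fintype.card_pos_iff.mpr ⟨a⟩⟩
      · rw [hℓ, if_neg hne, Equiv.Perm.length_toList]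
        have hsup2 : a ∈ σ.support := by
          by_contra h
          exact hne (Equiv.Perm.toList_eq_nil_iff.mpr h)
        have h2 := Equiv.Perm.two_le_card_support_cycleOf_iff.mpr
          (Equiv.Perm.mem_support.mp hsup2)
        exact ⟨by omega, (Finset.card_le_univ _).trans (le_of_eq Finset.card_univ)⟩
    exact ⟨hle, hℓa⟩
  rw [Finset.sum_subset himage ?hvanish]
  case hvanish =>
    intro l _ hl2
    rw [Finset.card_eq_zero, Finset.filter_eq_empty_iff]
    intro σ hσ h
    exact hl2 (Finset.mem_image.mpr ⟨σ, hσ, h⟩)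
  have hdisj : (↑K : Set ℕ).PairwiseDisjoint (Gl a) := by
    intro ℓ1 h1 ℓ2 h2 hne
    have h1' : 1 ≤ ℓ1 := (Finset.mem_Icc.mp (Finset.mem_filter.mp h1).1).1
    have h2' : 1 ≤ ℓ2 := (Finset.mem_Icc.mp (Finset.mem_filter.mp h2).1).1
    rw [Function.onFun, Finset.disjoint_left]
    intro l hl1 hl2
    exact hne (((good_of_mem_Gl a h1' hl1).2.symm).trans (good_of_mem_Gl a h2' hl2).2)
  rw [Finset.sum_biUnion hdisj]
  refine Finset.sum_congr rfl ?_
  intro ℓ hℓ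
  obtain ⟨hIcc, hℓk⟩ := Finset.mem_filter.mp hℓ
  obtain ⟨h1, h2⟩ := Finset.mem_Icc.mp hIcc
  have hfib : ∀ l ∈ Gl a ℓ,
      (s.filter (fun σ => σ.toList a = l)).card = N k (Fin (Fintype.card α - ℓ)) := by
    intro l hl
    obtain ⟨hgood, hval⟩ := good_of_mem_Gl a h1 hl
    have hlk : (if l = [] then 1 else l.length) ≠ k := by rw [hval]; exact hℓk
    have hf : s.filter (fun σ => σ.toList a = l)
        = Finset.univ.filter (fun σ : Equiv.Perm α => Q k σ ∧ σ.toList a = l) := by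
      rw [hs, Finset.filter_filter]
    rw [hf, card_filter_univ, Nat.card_congr (fiberEquiv (k := k) hgood hlk)]
    have hN : Nat.card {τ : Equiv.Perm {x : α // x ∉ ext0 a l} // Q k τ}
        = N k {x : α // x ∉ ext0 a l} := rfl
    rw [hN]
    refine N_congr k (Fintype.equivFinOfCardEq ?_)
    have hnodup := nodup_ext0 hgood
    have hcard : Fintype.card {x : α // x ∉ ext0 a l}
        = Fintype.card α - (ext0 a l).toFinset.card := by
      rw [Fintype.card_subtype]
      have huniv : Finset.univ.filter (fun x : α => x ∉ ext0 a l)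
          = Finset.univ \ (ext0 a l).toFinset := by
        ext x
        simp
      rw [huniv, Finset.card_sdiff_of_subset (Finset.subset_univ _), Finset.card_univ]
    rw [hcard, List.toFinset_card_of_nodup hnodup, length_ext0, hval]
  rw [Finset.sum_congr rfl hfib, Finset.sum_const, smul_eq_mul, card_Gl]

end Count

section Formula

/-- partial sums of the exponential series -/
def P (r : ℝ) (M : ℕ) : ℝ := ∑ j ∈ Finset.range M, r ^ j / j.factorial

/-- the truncated series giving the probability for `n` elements -/
def S (k n : ℕ) : ℝ := P (-(1 / k)) (n / k + 1)

lemma S_of_lt {k n : ℕ} (h : n < k) : S k n = 1 := by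
  have : n / k = 0 := Nat.div_eq_of_lt h
  simp [S, P, this]

lemma S_identity (k : ℕ) (hk : 0 < k) (n : ℕ) :
    (n : ℝ) * S k n = (∑ m ∈ Finset.range n, S k m) - (if k ≤ n then S k (n - k) else 0) := by
  induction n with
  | zero => simp [Nat.not_le_of_lt hk]
  | succ n ih =>
    set r : ℝ := -(1 / k) with hr
    have hk0 : (k : ℝ) ≠ 0 := Nat.cast_ne_zero.mpr hk.ne'
    have hkr : (k : ℝ) * r = -1 := by
      rw [hr]
      field_simp
    by_cases hdvd : k ∣ (n + 1)
    · have hM : (n + 1) / k = n / k + 1 := by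
        rw [Nat.succ_div, if_pos hdvd]
      set d : ℕ := n / k with hd
      have h0 := Nat.div_mul_cancel hdvd
      rw [hM] at h0
      have hnk : n + 1 = d * k + k := by rw [← h0]; ring
      have hS : S k (n + 1) = S k n + r ^ (d + 1) / (d + 1).factorial := by
        rw [S, S, hM, ← hd, P, P, Finset.sum_range_succ]
      have hcast : ((n : ℝ) + 1) = (k : ℝ) * ((d : ℝ) + 1) := by
        have hcc := congrArg (Nat.cast (R := ℝ)) hnk
        push_cast at hcc
        linear_combination hcc
      have key : ((n : ℝ) + 1) * (r ^ (d + 1) / (d + 1).factorial)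
          = -(r ^ d / d.factorial) := by
        rw [hcast, Nat.factorial_succ]
        push_cast
        have hfd : (d.factorial : ℝ) ≠ 0 := Nat.cast_ne_zero.mpr d.factorial_ne_zero
        have hd1 : ((d : ℝ) + 1) ≠ 0 := by positivity
        have hstep : (k : ℝ) * ((d : ℝ) + 1) * (r ^ (d + 1) / (((d : ℝ) + 1) * (d.factorial : ℝ)))
            = ((k : ℝ) * r) * r ^ d / (d.factorial : ℝ) := by
          rw [pow_succ]
          field_simp
        rw [hstep, hkr]
        ring
      by_cases hkn : k ≤ n
      · have hd1 : 1 ≤ d := by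
          rw [hd, Nat.le_div_iff_mul_le hk]
          omega
        have hdk : d * k = (d - 1) * k + k := by
          have hdd : d = (d - 1) + 1 := by omega
          conv_lhs => rw [hdd]
          rw [Nat.succ_mul]
        have h1 : (n + 1 - k) / k = d := by
          have hh : n + 1 - k = d * k := by omega
          rw [hh, Nat.mul_div_cancel _ hk]
        have h2 : (n - k) / k = d - 1 := by
          have hh : n - k = (k - 1) + k * (d - 1) := by
            have : (d - 1) * k = k * (d - 1) := Nat.mul_comm _ _
            omega
          rw [hh, Nat.add_mul_div_left _ _ hk, Nat.div_eq_of_lt (by omega)]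
          omega
        have hS2 : S k (n + 1 - k) = S k (n - k) + r ^ d / d.factorial := by
          rw [S, S, h1, h2]
          have hd' : d - 1 + 1 = d := by omega
          rw [hd', P, P, Finset.sum_range_succ]
        rw [Finset.sum_range_succ, hS, hS2, if_pos (by omega : k ≤ n + 1)]
        rw [if_pos hkn] at ih
        push_cast
        push_cast at ih
        nlinarith [key, ih]
      · have hkle : k ≤ n + 1 := Nat.le_of_dvd (by omega) hdvd
        have hkn1 : k = n + 1 := by omega
        have hd0 : d = 0 := by
          rw [hd]
          exact Nat.div_eq_of_lt (by omega)
        have hSn : S k n = 1 := S_of_lt (by omega)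
        have hsum : ∀ m ∈ Finset.range n, S k m = 1 := by
          intro m hm
          exact S_of_lt (by have := Finset.mem_range.mp hm; omega)
        rw [Finset.sum_range_succ, Finset.sum_congr rfl hsum, Finset.sum_const,
          if_pos (by omega : k ≤ n + 1), hS, hd0, hSn]
        have hzero : n + 1 - k = 0 := by omega
        rw [hzero, S_of_lt hk]
        have hk2 : ((n : ℝ) + 1) = (k : ℝ) := by
          have := congrArg (Nat.cast (R := ℝ)) hkn1
          push_cast at this
          linarith
        simp only [Finset.card_range, nsmul_eq_mul, pow_one, Nat.factorial_one,
          Nat.cast_one, mul_one, zero_add]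
        push_cast
        linear_combination r * hk2 + hkr
    · have hM : (n + 1) / k = n / k := by
        rw [Nat.succ_div, if_neg hdvd]
        omega
      have hS : S k (n + 1) = S k n := by rw [S, S, hM]
      by_cases hkn : k ≤ n
      · have hS2 : S k (n + 1 - k) = S k (n - k) := by
          have hd2 : ¬ k ∣ (n - k) + 1 := by
            intro h
            exact hdvd (by
              have : n + 1 = ((n - k) + 1) + k := by omega
              rw [this]
              exact Nat.dvd_add h dvd_rfl)
          have : (n + 1 - k) = (n - k) + 1 := by omega
          rw [S, S, this, Nat.succ_div, if_neg hd2]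

        rw [Finset.sum_range_succ, hS, hS2, if_pos (by omega : k ≤ n + 1)]
        rw [if_pos hkn] at ih
        push_cast
        push_cast at ih
        linarith
      · have hkn1 : ¬ k ≤ n + 1 := by
          intro h
          have : k = n + 1 := by omega
          exact hdvd (this ▸ dvd_rfl)
        rw [Finset.sum_range_succ, hS, if_neg hkn1]
        rw [if_neg hkn] at ih
        push_cast
        push_cast at ih
        linarith

lemma N_zero (k : ℕ) : N k (Fin 0) = 1 := by
  rw [N]
  have hall : ∀ σ : Equiv.Perm (Fin 0), Q k σ := fun σ x => x.elim0
  rw [Nat.card_congr (Equiv.subtypeUnivEquiv hall)]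
  rw [Nat.card_eq_fintype_card, Fintype.card_perm]
  simp

lemma S_zero (k : ℕ) : S k 0 = 1 := by
  simp [S, P]

lemma N_formula (k : ℕ) (hk : 0 < k) : ∀ n : ℕ, (N k (Fin n) : ℝ) = n.factorial * S k n := by
  intro n
  induction n using Nat.strong_induction_on with
  | _ n ih =>
    cases n with
    | zero =>
      rw [N_zero, S_zero]
      simp
    | succ m =>
      set K := (Finset.Icc 1 (m + 1)).filter (· ≠ k) with hKdef
      have hrec : (N k (Fin (m + 1)) : ℝ)
          = ∑ ℓ ∈ K, (m.descFactorial (ℓ - 1) : ℝ) * (N k (Fin (m + 1 - ℓ)) : ℝ) := by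
        rw [N_rec k (0 : Fin (m + 1))]
        simp only [Fintype.card_fin, Nat.add_sub_cancel]
        push_cast
        rfl
      rw [hrec]
      have hstep : ∀ ℓ ∈ K, (m.descFactorial (ℓ - 1) : ℝ) * (N k (Fin (m + 1 - ℓ)) : ℝ)
          = (m.factorial : ℝ) * S k (m + 1 - ℓ) := by
        intro ℓ hℓ
        obtain ⟨hIcc, hne⟩ := Finset.mem_filter.mp hℓ
        obtain ⟨h1, h2⟩ := Finset.mem_Icc.mp hIcc
        rw [ih (m + 1 - ℓ) (by omega)]
        have hnat : (m + 1 - ℓ).factorial * m.descFactorial (ℓ - 1) = m.factorial := by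
          have h' : ℓ - 1 ≤ m := by omega
          have hfd := Nat.factorial_mul_descFactorial h'
          have heq : m - (ℓ - 1) = m + 1 - ℓ := by omega
          rw [heq] at hfd
          exact hfd
        have hcast := congrArg (Nat.cast (R := ℝ)) hnat
        push_cast at hcast
        linear_combination (S k (m + 1 - ℓ)) * hcast
      rw [Finset.sum_congr rfl hstep, ← Finset.mul_sum]
      have hsplit : ∑ ℓ ∈ K, S k (m + 1 - ℓ)
          = (∑ ℓ ∈ Finset.Icc 1 (m + 1), S k (m + 1 - ℓ))
            - (if k ≤ m + 1 then S k (m + 1 - k) else 0) := by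
        rw [← Finset.sum_filter_add_sum_filter_not (Finset.Icc 1 (m + 1)) (· ≠ k)
          (fun ℓ => S k (m + 1 - ℓ))]
        have hfil : (Finset.Icc 1 (m + 1)).filter (fun ℓ => ¬ ℓ ≠ k)
            = if k ≤ m + 1 then {k} else ∅ := by
          ext x
          by_cases hkm : k ≤ m + 1
          · rw [if_pos hkm]
            simp only [Finset.mem_filter, Finset.mem_Icc, not_not, Finset.mem_singleton]
            constructor
            · rintro ⟨_, rfl⟩
              rfl
            · rintro rfl
              exact ⟨⟨hk, hkm⟩, rfl⟩
          · rw [if_neg hkm]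
            simp only [Finset.mem_filter, Finset.mem_Icc, not_not, Finset.notMem_empty,
              iff_false]
            rintro ⟨⟨_, hle⟩, rfl⟩
            exact hkm hle
        rw [hfil]
        by_cases hkm : k ≤ m + 1
        · rw [if_pos hkm, if_pos hkm, Finset.sum_singleton]
          ring
        · rw [if_neg hkm, if_neg hkm, Finset.sum_empty]
          ring
      have hreindex : ∑ ℓ ∈ Finset.Icc 1 (m + 1), S k (m + 1 - ℓ)
          = ∑ j ∈ Finset.range (m + 1), S k j := by
        apply Finset.sum_nbij' (fun ℓ => m + 1 - ℓ) (fun j => m + 1 - j)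
        · intro a ha
          have := Finset.mem_Icc.mp ha
          rw [Finset.mem_range]
          omega
        · intro b hb
          have := Finset.mem_range.mp hb
          rw [Finset.mem_Icc]
          omega
        · intro a ha
          have := Finset.mem_Icc.mp ha
          omega
        · intro b hb
          have := Finset.mem_range.mp hb
          omega
        · intro a ha
          rfl
      rw [hsplit, hreindex, ← S_identity k hk (m + 1)]
      rw [Nat.factorial_succ]
      push_cast
      ring

theorem prob_tendsto (k : ℕ) (hk : 0 < k) :
    Tendsto (fun n : ℕ => S k n) atTop (nhds (Real.exp (-(1 / k)))) := by
  have hP : Tendsto (fun M => P (-(1 / (k : ℝ))) M) atTop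
      (nhds (Real.exp (-(1 / (k : ℝ))))) := by
    rw [Real.exp_eq_exp_ℝ]
    exact (NormedSpace.expSeries_div_hasSum_exp (-(1 / (k : ℝ)))).tendsto_sum_nat
  have hdiv : Tendsto (fun n : ℕ => n / k + 1) atTop atTop := by
    apply Filter.tendsto_atTop_atTop.mpr
    intro b
    refine ⟨b * k, fun n hn => ?_⟩
    have : b ≤ n / k := (Nat.le_div_iff_mul_le hk).mpr hn
    omega
  exact hP.comp hdiv

end Formula

end
end ProbNoK

open Filter ProbNoK

/-- The probability that a uniformly random permutation of `n` elements has no cycle of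
length `k` tends to `e^{-1/k}` as `n → ∞`. -/
theorem prob_no_k_cycle (k : ℕ) (hk : 0 < k) :
    Tendsto
      (fun n : ℕ =>
        ({π : Equiv.Perm (Fin n) |
            ∀ x : Fin n, (MulAction.orbit (Subgroup.zpowers π) x).ncard ≠ k}.ncard : ℝ)
          / n.factorial)
      atTop (nhds (Real.exp (-(1 / k)))) := by
  have hfun : ∀ n : ℕ,
      ({π : Equiv.Perm (Fin n) |
          ∀ x : Fin n, (MulAction.orbit (Subgroup.zpowers π) x).ncard ≠ k}.ncard : ℝ)
        / n.factorial = S k n := by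
    intro n
    have h1 : {π : Equiv.Perm (Fin n) |
        ∀ x : Fin n, (MulAction.orbit (Subgroup.zpowers π) x).ncard ≠ k}.ncard
        = N k (Fin n) := by
      rw [← Nat.card_coe_set_eq]
      rfl
    rw [h1, N_formula k hk n]
    have hne : (n.factorial : ℝ) ≠ 0 := Nat.cast_ne_zero.mpr n.factorial_ne_zero
    rw [mul_comm, mul_div_assoc, div_self hne, mul_one]
  simp only [hfun]
  exact prob_tendsto k hk
end
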